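/- arXiv:2111.10858 — 2 statements merged into one kernel-verified Lean document; each statement's English description precedes it below -/
import Mathlib

section
/- Under the setting of the previous statement, the differential of x*(W₀) = P_{N(W₀)} q for a fixed vector q ∈ ℝ^n under a perturbation ∂W₀ of W₀ (with rank kept constant) is ∂x* = −(C + Cᵀ) q, where C = W₀† ∂W₀ P_{N(W₀)}. -/
attribute [local instance] Matrix.normedAddCommGroup Matrix.normedSpace

open scoped Matrix

section helpers
variable {a b c : ℕ} {t : ℝ}

lemma entry_deriv {A : ℝ → Matrix (Fin a) (Fin b) ℝ} {A' : Matrix (Fin a) (Fin b) ℝ}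
    (h : HasDerivAt A A' t) (i : Fin a) (j : Fin b) :
    HasDerivAt (fun τ => A τ i j) (A' i j) t :=
  hasDerivAt_pi.mp (hasDerivAt_pi.mp h i) j

lemma matrix_deriv_of_entries {A : ℝ → Matrix (Fin a) (Fin b) ℝ} {A' : Matrix (Fin a) (Fin b) ℝ}
    (h : ∀ i j, HasDerivAt (fun τ => A τ i j) (A' i j) t) :
    HasDerivAt A A' t :=
  hasDerivAt_pi.mpr fun i => hasDerivAt_pi.mpr fun j => h i j

lemma mul_deriv {A : ℝ → Matrix (Fin a) (Fin b) ℝ} {A' : Matrix (Fin a) (Fin b) ℝ}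
    {B : ℝ → Matrix (Fin b) (Fin c) ℝ} {B' : Matrix (Fin b) (Fin c) ℝ}
    (hA : HasDerivAt A A' t) (hB : HasDerivAt B B' t) :
    HasDerivAt (fun τ => A τ * B τ) (A' * B t + A t * B') t := by
  refine matrix_deriv_of_entries fun i j => ?_
  have : ∀ τ, (A τ * B τ) i j = ∑ k, A τ i k * B τ k j := fun τ => Matrix.mul_apply
  simp only [this]
  have : (A' * B t + A t * B') i j = ∑ k, (A' i k * B t k j + A t i k * B' k j) := by
    simp [Matrix.mul_apply, Finset.sum_add_distrib]
  rw [this]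
  exact HasDerivAt.fun_sum fun k _ => (entry_deriv hA i k).mul (entry_deriv hB k j)

lemma mulVec_deriv {A : ℝ → Matrix (Fin a) (Fin b) ℝ} {A' : Matrix (Fin a) (Fin b) ℝ}
    (hA : HasDerivAt A A' t) (q : Fin b → ℝ) :
    HasDerivAt (fun τ => (A τ).mulVec q) (A'.mulVec q) t := by
  refine hasDerivAt_pi.mpr fun i => ?_
  have : ∀ τ, (A τ).mulVec q i = ∑ k, A τ i k * q k := fun τ => rfl
  simp only [this]
  exact HasDerivAt.fun_sum fun k _ => (entry_deriv hA i k).mul_const (q k)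

end helpers

/-- Differential of x*(W₀) = P_{N(W₀)} q under a constant-rank perturbation of W₀:
    ∂x* = −(C + Cᵀ) q with C = W₀† ∂W₀ P_{N(W₀)}. -/
theorem differential_wrt_inactive_rows
    {k₀ n : ℕ}
    (W₀ : ℝ → Matrix (Fin k₀) (Fin n) ℝ) (W₀dag : ℝ → Matrix (Fin n) (Fin k₀) ℝ)
    -- W₀dag τ is the Moore–Penrose pseudoinverse of W₀ τ for every τ
    (h1 : ∀ τ, W₀ τ * W₀dag τ * W₀ τ = W₀ τ)
    (h2 : ∀ τ, W₀dag τ * W₀ τ * W₀dag τ = W₀dag τ)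
    (h3 : ∀ τ, (W₀dag τ * W₀ τ).transpose = W₀dag τ * W₀ τ)
    (h4 : ∀ τ, (W₀ τ * W₀dag τ).transpose = W₀ τ * W₀dag τ)
    (t : ℝ) (W₀' : Matrix (Fin k₀) (Fin n) ℝ)
    (hW : HasDerivAt W₀ W₀' t)
    -- constant rank: the pseudoinverse varies differentiably
    (hdag : DifferentiableAt ℝ W₀dag t)
    (q : Fin n → ℝ)
    (xstar : ℝ → (Fin n → ℝ)) (hx : ∀ τ, xstar τ = (1 - W₀dag τ * W₀ τ).mulVec q)
    (C : Matrix (Fin n) (Fin n) ℝ) (hC : C = W₀dag t * W₀' * (1 - W₀dag t * W₀ t)) :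
    HasDerivAt xstar (-((C + C.transpose).mulVec q)) t := by
  obtain ⟨D, hD⟩ : ∃ D, HasDerivAt W₀dag D t := ⟨_, hdag.hasDerivAt⟩
  set P : ℝ → Matrix (Fin n) (Fin n) ℝ := fun τ => W₀dag τ * W₀ τ with hPdef
  set E : Matrix (Fin n) (Fin n) ℝ := D * W₀ t + W₀dag t * W₀' with hEdef
  have hP : HasDerivAt P E t := mul_deriv hD hW
  -- E is symmetric
  have hPsymm : ∀ τ, (P τ)ᵀ = P τ := h3
  have hEsymm : Eᵀ = E := by
    have h1' : HasDerivAt (fun τ => (P τ)ᵀ) Eᵀ t := by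
      refine matrix_deriv_of_entries fun i j => ?_
      exact entry_deriv hP j i
    have h2' : HasDerivAt (fun τ => (P τ)ᵀ) E t := by
      have : (fun τ => (P τ)ᵀ) = P := funext hPsymm
      rw [this]; exact hP
    exact h1'.unique h2'
  -- P idempotent
  have hPidem : ∀ τ, P τ * P τ = P τ := by
    intro τ
    show (W₀dag τ * W₀ τ) * (W₀dag τ * W₀ τ) = W₀dag τ * W₀ τ
    calc (W₀dag τ * W₀ τ) * (W₀dag τ * W₀ τ)
        = (W₀dag τ * W₀ τ * W₀dag τ) * W₀ τ := by rw [← Matrix.mul_assoc]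
      _ = W₀dag τ * W₀ τ := by rw [h2 τ]
  have hEP : E * P t + P t * E = E := by
    have h1' : HasDerivAt (fun τ => P τ * P τ) (E * P t + P t * E) t := mul_deriv hP hP
    have h2' : HasDerivAt (fun τ => P τ * P τ) E t := by
      have : (fun τ => P τ * P τ) = P := funext hPidem
      rw [this]; exact hP
    exact h1'.unique h2'
  -- W (1 - P) = 0
  have hWP : W₀ t * (1 - P t) = 0 := by
    have : W₀ t * P t = W₀ t := by
      show W₀ t * (W₀dag t * W₀ t) = W₀ t
      rw [← Matrix.mul_assoc]; exact h1 t
    rw [Matrix.mul_sub, Matrix.mul_one, this, sub_self]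
  -- E (1 - P) = C
  have hE1P : E * (1 - P t) = C := by
    rw [hEdef, hC]
    rw [Matrix.add_mul, Matrix.mul_assoc D, hWP, Matrix.mul_zero, zero_add, Matrix.mul_assoc]
  -- E P = Cᵀ : from hEP, E P = E - P E = (1-P) E, and ((1-P)E)ᵀ = E(1-P) = C
  have hEPC : E * P t = Cᵀ := by
    have h1' : E * P t = E - P t * E := eq_sub_of_add_eq hEP
    have h2' : (1 - P t) * E = E - P t * E := by rw [Matrix.sub_mul, Matrix.one_mul]
    have h3' : ((1 - P t) * E)ᵀ = C := by
      rw [Matrix.transpose_mul, hEsymm, Matrix.transpose_sub, Matrix.transpose_one, hPsymm t,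
        hE1P]
    rw [h1', ← h2', ← Matrix.transpose_transpose E]
    calc (1 - P t) * E = ((1 - P t) * E)ᵀᵀ := (Matrix.transpose_transpose _).symm
      _ = Cᵀ := by rw [h3']
  have hEeq : E = C + Cᵀ := by
    have : E = E * (1 - P t) + E * P t := by
      rw [← Matrix.mul_add, sub_add_cancel, Matrix.mul_one]
    rw [this, hE1P, hEPC]
  -- assemble
  have hx' : xstar = fun τ => (1 - P τ).mulVec q := funext hx
  rw [hx']
  have hOneP : HasDerivAt (fun τ => 1 - P τ) (-E) t := by
    have h0 := (hasDerivAt_const t (1 : Matrix (Fin n) (Fin n) ℝ)).fun_sub hP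
    rw [zero_sub] at h0
    exact h0
  have h := mulVec_deriv hOneP q
  rw [hEeq] at h
  rwa [Matrix.neg_mulVec] at h
end

section
/- Let U(x) = (1/2)‖x − x_t‖₂² and x*(W₀) = P_{N(W₀)} q with q ∈ ℝ^n fixed. Then, at a point where rank(W₀) is locally constant, the gradient of U(x*(W₀)) with respect to W₀ is ∇_{W₀} U = −(P_{N(W₀)} (q (∇_x U)ᵀ + (∇_x U) qᵀ) W₀†)ᵀ, where ∇_x U = x* − x_t. -/
attribute [local instance] Matrix.normedAddCommGroup Matrix.normedSpace

open Matrix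

noncomputable def mulCLM (na nb nc : ℕ) :
    Matrix (Fin na) (Fin nb) ℝ →L[ℝ] Matrix (Fin nb) (Fin nc) ℝ →L[ℝ] Matrix (Fin na) (Fin nc) ℝ :=
  LinearMap.toContinuousLinearMap
  { toFun := fun A => LinearMap.toContinuousLinearMap
      { toFun := fun B => A * B
        map_add' := fun B C => Matrix.mul_add A B C
        map_smul' := fun r B => (Matrix.mul_smul A r B) }
    map_add' := fun A A' => by ext B i j; simp [Matrix.add_mul]
    map_smul' := fun r A => by ext B i j; simp [Matrix.smul_mul] }

@[simp] lemma mulCLM_apply {na nb nc : ℕ} (A : Matrix (Fin na) (Fin nb) ℝ)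
    (B : Matrix (Fin nb) (Fin nc) ℝ) : mulCLM na nb nc A B = A * B := rfl

theorem HasFDerivAt.matmul {na nb nc : ℕ} {X : Type*} [NormedAddCommGroup X] [NormedSpace ℝ X]
    {f : X → Matrix (Fin na) (Fin nb) ℝ} {g : X → Matrix (Fin nb) (Fin nc) ℝ}
    {f' : X →L[ℝ] Matrix (Fin na) (Fin nb) ℝ} {g' : X →L[ℝ] Matrix (Fin nb) (Fin nc) ℝ} {x : X}
    (hf : HasFDerivAt f f' x) (hg : HasFDerivAt g g' x)
    {L : X →L[ℝ] Matrix (Fin na) (Fin nc) ℝ}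
    (hL : ∀ Δ, L Δ = f' Δ * g x + f x * g' Δ) :
    HasFDerivAt (fun y => f y * g y) L x := by
  have h := (mulCLM na nb nc).hasFDerivAt_of_bilinear hf hg
  refine HasFDerivAt.congr_fderiv h (ContinuousLinearMap.ext fun Δ => ?_)
  exact ((hL Δ).trans (add_comm _ _)).symm

noncomputable def transCLM (na nb : ℕ) :
    Matrix (Fin na) (Fin nb) ℝ →L[ℝ] Matrix (Fin nb) (Fin na) ℝ :=
  LinearMap.toContinuousLinearMap
  { toFun := fun A => A.transpose
    map_add' := fun A B => Matrix.transpose_add A B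
    map_smul' := fun r A => Matrix.transpose_smul r A }

@[simp] lemma transCLM_apply {na nb : ℕ} (A : Matrix (Fin na) (Fin nb) ℝ) :
    transCLM na nb A = A.transpose := rfl

noncomputable def mulVecCLM (na nb : ℕ) (q : Fin nb → ℝ) :
    Matrix (Fin na) (Fin nb) ℝ →L[ℝ] (Fin na → ℝ) :=
  LinearMap.toContinuousLinearMap
  { toFun := fun A => A.mulVec q
    map_add' := fun A B => Matrix.add_mulVec A B q
    map_smul' := fun r A => by
      ext i; simp [Matrix.mulVec, dotProduct, Finset.mul_sum, mul_assoc] }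

@[simp] lemma mulVecCLM_apply {na nb : ℕ} (q : Fin nb → ℝ) (A : Matrix (Fin na) (Fin nb) ℝ) :
    mulVecCLM na nb q A = A.mulVec q := rfl

lemma trace_vecMulVec_mul {n : ℕ} (u v : Fin n → ℝ) (B : Matrix (Fin n) (Fin n) ℝ) :
    Matrix.trace (Matrix.vecMulVec u v * B) = v ⬝ᵥ B.mulVec u := by
  simp [Matrix.trace, Matrix.diag, Matrix.mul_apply, Matrix.vecMulVec_apply, Matrix.mulVec,
    dotProduct, Finset.mul_sum]
  rw [Finset.sum_comm]
  congr 1; ext j; congr 1; ext i; ring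

lemma pinv_deriv_formula {k n : ℕ}
    (A : Matrix (Fin k) (Fin n) ℝ) (Ap E : Matrix (Fin n) (Fin k) ℝ)
    (Δ : Matrix (Fin k) (Fin n) ℝ)
    (p1 : A * Ap * A = A) (p2 : Ap * A * Ap = Ap) (p3 : (Ap * A).transpose = Ap * A)
    (e1 : (Δ * Ap + A * E) * A + A * Ap * Δ = Δ)
    (e3 : (E * A + Ap * Δ).transpose = E * A + Ap * Δ) :
    E * A + Ap * Δ =
      Ap * Δ * (1 - Ap * A) + (1 - Ap * A) * Δ.transpose * Ap.transpose := by
  set P : Matrix (Fin n) (Fin n) ℝ := Ap * A with hP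
  set S : Matrix (Fin n) (Fin n) ℝ := E * A + Ap * Δ with hS
  set N : Matrix (Fin n) (Fin n) ℝ := 1 - P with hN
  have hPAp : P * Ap = Ap := by rw [hP, Matrix.mul_assoc, ← Matrix.mul_assoc Ap A Ap]; rw [p2]
  have hNt : N.transpose = N := by rw [hN, Matrix.transpose_sub, Matrix.transpose_one, p3]
  have hEAP : E * A * P = E * A := by
    rw [hP, Matrix.mul_assoc E A (Ap * A), ← Matrix.mul_assoc A Ap A, p1]
  have key1 : P * (E * A) = -(Ap * Δ * P) := by
    have h := congrArg (fun X => Ap * X) e1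
    simp only [Matrix.mul_add, Matrix.add_mul] at h
    have h3 : Ap * (A * Ap * Δ) = Ap * Δ := by
      rw [← Matrix.mul_assoc, ← Matrix.mul_assoc, p2]
    have h1 : Ap * (Δ * Ap * A) = Ap * Δ * P := by
      rw [hP, ← Matrix.mul_assoc, ← Matrix.mul_assoc, Matrix.mul_assoc (Ap * Δ) Ap A]
    have h2 : Ap * (A * E * A) = P * (E * A) := by
      rw [hP, ← Matrix.mul_assoc, ← Matrix.mul_assoc, Matrix.mul_assoc (Ap * A) E A]
    rw [h1, h2, h3, add_eq_right] at h
    exact eq_neg_of_add_eq_zero_right h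
  have hPS : P * S = Ap * Δ * N := by
    rw [hS, Matrix.mul_add, key1, ← Matrix.mul_assoc P Ap Δ, hPAp, hN, Matrix.mul_sub,
      Matrix.mul_one]
    abel
  have hSP : S * P = E * A + Ap * Δ * P := by
    rw [hS, Matrix.add_mul, hEAP]
  have hSN : S * N = Ap * Δ * N := by
    rw [hN, Matrix.mul_sub, Matrix.mul_one, hSP, hS, Matrix.mul_sub, Matrix.mul_one]
    abel
  have hNS : N * S = N * Δ.transpose * Ap.transpose := by
    have h : N * S = (S * N).transpose := by
      rw [Matrix.transpose_mul, hNt, e3]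
    rw [h, hSN, Matrix.transpose_mul, Matrix.transpose_mul, hNt, Matrix.mul_assoc,
      ← Matrix.mul_assoc N Δ.transpose Ap.transpose]
  calc S = P * S + N * S := by rw [hN, Matrix.sub_mul, Matrix.one_mul]; abel
    _ = Ap * Δ * N + N * Δ.transpose * Ap.transpose := by rw [hPS, hNS]


/-- Gradient of U(x*(W₀)) with respect to W₀, where x*(W₀) = P_{N(W₀)} q:
    ∇_{W₀} U = −(P_{N(W₀)} (q ∇ₓUᵀ + ∇ₓU qᵀ) W₀†)ᵀ, with ∇ₓU = x* − x_t,
    at a point where the rank of W₀ is locally constant (encoded by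
    differentiability of the pseudoinverse map). -/
theorem gradient_wrt_inactive_rows
    {k₀ n : ℕ}
    (pinv : Matrix (Fin k₀) (Fin n) ℝ → Matrix (Fin n) (Fin k₀) ℝ)
    -- pinv M is the Moore–Penrose pseudoinverse of M, for every M
    (h1 : ∀ M, M * pinv M * M = M)
    (h2 : ∀ M, pinv M * M * pinv M = pinv M)
    (h3 : ∀ M, (pinv M * M).transpose = pinv M * M)
    (h4 : ∀ M, (M * pinv M).transpose = M * pinv M)
    (W₀ : Matrix (Fin k₀) (Fin n) ℝ)
    -- locally constant rank at W₀
    (hrank : DifferentiableAt ℝ pinv W₀)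
    (q xt : Fin n → ℝ)
    (xstar : Matrix (Fin k₀) (Fin n) ℝ → (Fin n → ℝ))
    (hx : ∀ M, xstar M = (1 - pinv M * M).mulVec q)
    (F : Matrix (Fin k₀) (Fin n) ℝ → ℝ)
    (hF : ∀ M, F M = (1/2) * ∑ i, (xstar M i - xt i)^2)
    (G : Matrix (Fin k₀) (Fin n) ℝ)
    (hG : G = -((1 - pinv W₀ * W₀) *
        (Matrix.vecMulVec q (xstar W₀ - xt) +
         Matrix.vecMulVec (xstar W₀ - xt) q) * pinv W₀).transpose) :
    ∃ L : Matrix (Fin k₀) (Fin n) ℝ →L[ℝ] ℝ,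
      HasFDerivAt F L W₀ ∧
      ∀ Δ : Matrix (Fin k₀) (Fin n) ℝ, L Δ = Matrix.trace (G.transpose * Δ) := by
  classical
  have hD : HasFDerivAt pinv (fderiv ℝ pinv W₀) W₀ := hrank.hasFDerivAt
  set D := fderiv ℝ pinv W₀ with hDdef
  set Ap := pinv W₀ with hApdef
  -- derivative of M ↦ pinv M * M
  set dP : Matrix (Fin k₀) (Fin n) ℝ →L[ℝ] Matrix (Fin n) (Fin n) ℝ :=
    (id (((mulCLM n k₀ n).flip W₀).comp D) : Matrix (Fin k₀) (Fin n) ℝ →L[ℝ] Matrix (Fin n) (Fin n) ℝ) + mulCLM n k₀ n Ap with hdP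
  have dP_apply : ∀ Δ, dP Δ = D Δ * W₀ + Ap * Δ := fun Δ => by
    rfl
  have hP : HasFDerivAt (fun M => pinv M * M) dP W₀ :=
    hD.matmul (hasFDerivAt_id W₀) (fun Δ => rfl)
  -- derivative of M ↦ M * pinv M
  set dQ : Matrix (Fin k₀) (Fin n) ℝ →L[ℝ] Matrix (Fin k₀) (Fin k₀) ℝ :=
    (id ((mulCLM k₀ n k₀).flip Ap) : Matrix (Fin k₀) (Fin n) ℝ →L[ℝ] Matrix (Fin k₀) (Fin k₀) ℝ) + (mulCLM k₀ n k₀ W₀).comp D with hdQ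
  have hQ : HasFDerivAt (fun M => M * pinv M) dQ W₀ :=
    (hasFDerivAt_id W₀).matmul hD (fun Δ => rfl)
  -- derivative of M ↦ M * pinv M * M, which equals the identity map
  set d1 : Matrix (Fin k₀) (Fin n) ℝ →L[ℝ] Matrix (Fin k₀) (Fin n) ℝ :=
    (id (((mulCLM k₀ k₀ n).flip W₀).comp dQ) : Matrix (Fin k₀) (Fin n) ℝ →L[ℝ] Matrix (Fin k₀) (Fin n) ℝ) + mulCLM k₀ k₀ n (W₀ * Ap) with hd1
  have h1' : HasFDerivAt (fun M => M * pinv M * M) d1 W₀ :=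
    hQ.matmul (hasFDerivAt_id W₀) (fun Δ => rfl)
  have hid : HasFDerivAt (fun M : Matrix (Fin k₀) (Fin n) ℝ => M * pinv M * M)
      (ContinuousLinearMap.id ℝ (Matrix (Fin k₀) (Fin n) ℝ)) W₀ := by
    have : (fun M : Matrix (Fin k₀) (Fin n) ℝ => M * pinv M * M) = fun M => M :=
      funext h1
    rw [this]; exact hasFDerivAt_id W₀
  have eq1 : ∀ Δ, (Δ * Ap + W₀ * D Δ) * W₀ + W₀ * Ap * Δ = Δ := by
    intro Δ
    have h := congrArg (fun L' => L' Δ) (h1'.unique hid)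
    rw [Matrix.add_mul]
    rw [← Matrix.add_mul]; exact h
  -- derivative of M ↦ (pinv M * M)ᵀ equals derivative of M ↦ pinv M * M
  have hPt : HasFDerivAt (fun M => ((pinv M * M).transpose : Matrix (Fin n) (Fin n) ℝ))
      ((transCLM n n).comp dP) W₀ := (transCLM n n).hasFDerivAt.comp W₀ hP
  have hPt' : HasFDerivAt (fun M => ((pinv M * M).transpose : Matrix (Fin n) (Fin n) ℝ))
      dP W₀ := by
    have : (fun M => ((pinv M * M).transpose : Matrix (Fin n) (Fin n) ℝ))
        = fun M => pinv M * M := funext h3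
    rw [this]; exact hP
  have eq3 : ∀ Δ, (D Δ * W₀ + Ap * Δ).transpose = D Δ * W₀ + Ap * Δ := by
    intro Δ
    have h := congrArg (fun L' => L' Δ) (hPt.unique hPt')
    simpa [dP_apply] using h
  -- the key formula for the derivative of the projector
  have keyS : ∀ Δ, D Δ * W₀ + Ap * Δ =
      Ap * Δ * (1 - Ap * W₀) + (1 - Ap * W₀) * Δ.transpose * Ap.transpose := fun Δ =>
    pinv_deriv_formula W₀ Ap (D Δ) Δ (h1 W₀) (h2 W₀) (h3 W₀) (eq1 Δ) (eq3 Δ)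
  -- derivative of xstar
  set dx : Matrix (Fin k₀) (Fin n) ℝ →L[ℝ] (Fin n → ℝ) :=
    -((mulVecCLM n n q).comp dP) with hdx
  have hxd : HasFDerivAt xstar dx W₀ := by
    have hxf : xstar = fun M => q - (pinv M * M).mulVec q := by
      funext M
      rw [hx M, Matrix.sub_mulVec, Matrix.one_mulVec]
    rw [hxf, hdx]
    exact ((mulVecCLM n n q).hasFDerivAt.comp W₀ hP).const_sub q
  -- derivative of F
  set g : Fin n → ℝ := fun i => xstar W₀ i - xt i with hg
  set L : Matrix (Fin k₀) (Fin n) ℝ →L[ℝ] ℝ :=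
    (1/2 : ℝ) • ∑ i : Fin n, (g i • ((ContinuousLinearMap.proj i).comp dx)
      + g i • ((ContinuousLinearMap.proj i).comp dx)) with hL
  have hFd : HasFDerivAt F L W₀ := by
    have hFf : F = fun M => (1/2 : ℝ) * ∑ i, (xstar M i - xt i)^2 := funext hF
    rw [hFf]
    have hterm : ∀ i : Fin n, HasFDerivAt (fun M => (xstar M i - xt i)^2)
        (g i • ((ContinuousLinearMap.proj i).comp dx)
          + g i • ((ContinuousLinearMap.proj i).comp dx)) W₀ := by
      intro i
      have hxi : HasFDerivAt (fun M => xstar M i)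
          ((ContinuousLinearMap.proj i).comp dx) W₀ := by
        have h := (ContinuousLinearMap.proj (R := ℝ) (φ := fun _ : Fin n => ℝ)
          i).hasFDerivAt.comp W₀ hxd
        exact h
      have hui : HasFDerivAt (fun M => xstar M i - xt i)
          ((ContinuousLinearMap.proj i).comp dx) W₀ := hxi.sub_const (xt i)
      have hsq := hui.mul hui
      have hpow : (fun M => (xstar M i - xt i)^2)
          = fun M => (xstar M i - xt i) * (xstar M i - xt i) := by
        funext M; ring
      rw [hpow]
      exact hsq
    have hsum := HasFDerivAt.sum (fun i (_ : i ∈ Finset.univ) => hterm i)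
    have := hsum.const_mul (1/2 : ℝ)
    rw [hL]
    simp only [Finset.sum_apply] at this
    exact this
  refine ⟨L, hFd, fun Δ => ?_⟩
  -- compute L Δ
  have hLΔ : L Δ = ∑ i, g i * (dx Δ i) := by
    rw [hL]
    simp only [ContinuousLinearMap.smul_apply, ContinuousLinearMap.coe_sum',
      Finset.sum_apply, ContinuousLinearMap.add_apply, ContinuousLinearMap.coe_comp',
      Function.comp_apply, ContinuousLinearMap.proj_apply, smul_eq_mul]
    rw [Finset.mul_sum]
    congr 1; ext i; ring
  have hdxΔ : dx Δ = -((Ap * Δ * (1 - Ap * W₀)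
      + (1 - Ap * W₀) * Δ.transpose * Ap.transpose).mulVec q) := by
    rw [hdx]
    simp only [ContinuousLinearMap.neg_apply, ContinuousLinearMap.coe_comp',
      Function.comp_apply, mulVecCLM_apply]
    rw [dP_apply, keyS Δ]
  -- the trace side
  set N : Matrix (Fin n) (Fin n) ℝ := 1 - Ap * W₀ with hN
  have hNt : N.transpose = N := by
    rw [hN, Matrix.transpose_sub, Matrix.transpose_one, h3 W₀]
  have hGt : G.transpose = -(N * (Matrix.vecMulVec q g + Matrix.vecMulVec g q) * Ap) := by
    rw [hG]
    have : (xstar W₀ - xt) = g := by funext i; simp [hg]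
    rw [this, Matrix.transpose_neg, Matrix.transpose_transpose, hN]
  -- assemble
  set B : Matrix (Fin n) (Fin n) ℝ := Ap * Δ * N with hB
  have hBt : N * Δ.transpose * Ap.transpose = B.transpose := by
    rw [hB, Matrix.transpose_mul, Matrix.transpose_mul, hNt, Matrix.mul_assoc,
      ← Matrix.mul_assoc N Δ.transpose Ap.transpose]
  have hdxΔ2 : dx Δ = -((B + B.transpose).mulVec q) := by rw [hdxΔ, hBt]
  have hsum : L Δ = -(g ⬝ᵥ ((B + B.transpose).mulVec q)) := by
    rw [hLΔ]
    simp [hdxΔ2, dotProduct, Finset.sum_neg_distrib]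
  have hcross : g ⬝ᵥ ((B + B.transpose).mulVec q) = g ⬝ᵥ B.mulVec q + q ⬝ᵥ B.mulVec g := by
    rw [Matrix.add_mulVec, dotProduct_add]
    congr 1
    rw [Matrix.mulVec_transpose, Matrix.dotProduct_mulVec, dotProduct_comm]
  have htr : Matrix.trace (-(N * (Matrix.vecMulVec q g + Matrix.vecMulVec g q) * Ap) * Δ)
      = -(g ⬝ᵥ B.mulVec q + q ⬝ᵥ B.mulVec g) := by
    rw [Matrix.neg_mul, Matrix.trace_neg]
    congr 1
    calc Matrix.trace (N * (Matrix.vecMulVec q g + Matrix.vecMulVec g q) * Ap * Δ)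
        = Matrix.trace (N * ((Matrix.vecMulVec q g + Matrix.vecMulVec g q) * (Ap * Δ))) := by
          rw [Matrix.mul_assoc, Matrix.mul_assoc]
      _ = Matrix.trace ((Matrix.vecMulVec q g + Matrix.vecMulVec g q) * (Ap * Δ) * N) := by
          rw [Matrix.trace_mul_comm]
      _ = Matrix.trace (Matrix.vecMulVec q g * B + Matrix.vecMulVec g q * B) := by
          rw [hB, Matrix.add_mul, Matrix.add_mul, Matrix.mul_assoc (Matrix.vecMulVec q g),
            Matrix.mul_assoc (Matrix.vecMulVec g q)]
      _ = g ⬝ᵥ B.mulVec q + q ⬝ᵥ B.mulVec g := by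
          rw [Matrix.trace_add, trace_vecMulVec_mul, trace_vecMulVec_mul]
  rw [hsum, hGt, htr, hcross]
end
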